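/- Let P be a finite partial interleaving between subsets of T₁ and T₂ with d_P(T₁, T₂) > 0, and let Q be a finite minimal P-augmentation. If P is dominant and locally correct, then Q is dominant and locally correct. -/

import Mathlib

open Set

/-- An abstract merge tree: the topological realization of a finite rooted tree with a
height function that is strictly increasing towards the root (the root sits at height ∞,
so above every point there is a unique ancestor at every height). The ancestor
relation `le` (`x ⪯ y` = `y` is an ancestor of `x`) abstracts the `f`-monotone paths. -/
structure MergeTree where
  X : Type
  le : X → X → Prop
  f : X → ℝ
  top : TopologicalSpace X
  nonempty : Nonempty X
  le_refl : ∀ x, le x x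
  le_trans : ∀ x y z, le x y → le y z → le x z
  le_antisymm : ∀ x y, le x y → le y x → x = y
  f_mono : ∀ x y, le x y → f x ≤ f y
  f_strictMono : ∀ x y, le x y → f x = f y → x = y
  f_cont : @Continuous X ℝ top inferInstance f
  /-- the unique ancestor of `x` at height `h` (junk for `h < f x`). -/
  anc : X → ℝ → X
  le_anc : ∀ x h, f x ≤ h → le x (anc x h)
  f_anc : ∀ x h, f x ≤ h → f (anc x h) = h
  anc_unique : ∀ x y, le x y → y = anc x (f y)
  /-- rootedness: any two points have a common ancestor. -/
  directed : ∀ x y, ∃ z, le x z ∧ le y z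
  /-- tree-ness: the ancestors of a point are totally ordered. -/
  anc_total : ∀ x y z, le x y → le x z → le y z ∨ le z y
  /-- the (finitely many) vertices of the underlying combinatorial tree. -/
  V : Set X
  V_finite : V.Finite

/-- `(S, φ)` is a partial up-map from `S ⊆ T₁` to `T₂`. -/
def IsUpMap (T1 T2 : MergeTree) (S : Set T1.X) (φ : T1.X → T2.X) : Prop :=
  (∀ x ∈ S, T1.f x ≤ T2.f (φ x)) ∧
  ∀ x1 ∈ S, ∀ x2 ∈ S, T1.le x1 x2 → T2.le (φ x1) (φ x2)

/-- The partial up-map `(S, φ)` extends the partial up-map `(S', φ')`. -/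
def UpMapExtends (T1 T2 : MergeTree) (S : Set T1.X) (φ : T1.X → T2.X)
    (S' : Set T1.X) (φ' : T1.X → T2.X) : Prop :=
  S' ⊆ S ∧ ∀ x ∈ S', T2.le (φ' x) (φ x)

/-- The partial up-map `(S, φ)` uses the partial up-map `(S', φ')`. -/
def UpMapUses (T1 T2 : MergeTree) (S : Set T1.X) (φ : T1.X → T2.X)
    (S' : Set T1.X) (φ' : T1.X → T2.X) : Prop :=
  S' ⊆ S ∧ ∀ x ∈ S', φ x = φ' x

/-- The map `φ↑[δ]`, sending `x` to the ancestor of `φ x` at height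
`max (f₁ x + δ) (f₂ (φ x))`. -/
noncomputable def liftMap (T1 T2 : MergeTree) (φ : T1.X → T2.X) (δ : ℝ) : T1.X → T2.X :=
  fun x => T2.anc (φ x) (max (T1.f x + δ) (T2.f (φ x)))

/-- `(S₁, φ, S₂, ψ)` is a partial interleaving between `S₁ ⊆ T₁` and `S₂ ⊆ T₂`. -/
def IsPartialInterleaving (T1 T2 : MergeTree) (S1 : Set T1.X) (φ : T1.X → T2.X)
    (S2 : Set T2.X) (ψ : T2.X → T1.X) : Prop :=
  IsUpMap T1 T2 S1 φ ∧ IsUpMap T2 T1 S2 ψ ∧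
  (∀ x ∈ S1, ∀ y ∈ S2, T2.le (φ x) y → T1.le x (ψ y)) ∧
  (∀ x ∈ S1, ∀ y ∈ S2, T1.le (ψ y) x → T2.le y (φ x))

/-- The partial interleaving `(S1, φ, S2, ψ)` extends `(S1', φ', S2', ψ')`. -/
def InterExtends (T1 T2 : MergeTree) (S1 : Set T1.X) (φ : T1.X → T2.X)
    (S2 : Set T2.X) (ψ : T2.X → T1.X)
    (S1' : Set T1.X) (φ' : T1.X → T2.X) (S2' : Set T2.X) (ψ' : T2.X → T1.X) : Prop :=
  UpMapExtends T1 T2 S1 φ S1' φ' ∧ UpMapExtends T2 T1 S2 ψ S2' ψ'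

/-- The partial interleaving `(S1, φ, S2, ψ)` uses `(S1', φ', S2', ψ')`:
its component maps agree with those of the latter on its domains. -/
def InterUses (T1 T2 : MergeTree) (S1 : Set T1.X) (φ : T1.X → T2.X)
    (S2 : Set T2.X) (ψ : T2.X → T1.X)
    (S1' : Set T1.X) (φ' : T1.X → T2.X) (S2' : Set T2.X) (ψ' : T2.X → T1.X) : Prop :=
  UpMapUses T1 T2 S1 φ S1' φ' ∧ UpMapUses T2 T1 S2 ψ S2' ψ'

/-- A complete interleaving between `T₁` and `T₂`. -/
def IsInterleaving (T1 T2 : MergeTree) (α : T1.X → T2.X) (β : T2.X → T1.X) : Prop :=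
  IsPartialInterleaving T1 T2 univ α univ β

/-- The shift `sup {f₂(φ x) − f₁ x | x ∈ S}` of a partial up-map (valued in `EReal`). -/
noncomputable def mapShift (T1 T2 : MergeTree) (S : Set T1.X) (φ : T1.X → T2.X) : EReal :=
  sSup ((fun x => ((T2.f (φ x) - T1.f x : ℝ) : EReal)) '' S)

/-- The shift of a partial interleaving. -/
noncomputable def interShift (T1 T2 : MergeTree) (S1 : Set T1.X) (φ : T1.X → T2.X)
    (S2 : Set T2.X) (ψ : T2.X → T1.X) : EReal :=
  max (mapShift T1 T2 S1 φ) (mapShift T2 T1 S2 ψ)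

/-- `α` and `β` are δ-compatible maps between `T₁` and `T₂` (Morozov et al.). -/
def Compatible (T1 T2 : MergeTree) (δ : ℝ) (α : T1.X → T2.X) (β : T2.X → T1.X) : Prop :=
  @Continuous T1.X T2.X T1.top T2.top α ∧ @Continuous T2.X T1.X T2.top T1.top β ∧
  (∀ x, T2.f (α x) = T1.f x + δ) ∧
  (∀ y, T1.f (β y) = T2.f y + δ) ∧
  (∀ x, β (α x) = T1.anc x (T1.f x + 2 * δ)) ∧
  (∀ y, α (β y) = T2.anc y (T2.f y + 2 * δ))

/-- The interleaving distance: the infimum δ for which δ-compatible maps exist. -/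
noncomputable def intDist (T1 T2 : MergeTree) : EReal :=
  sInf {d : EReal | ∃ δ : ℝ, 0 ≤ δ ∧ d = (δ : EReal) ∧ ∃ α β, Compatible T1 T2 δ α β}

/-- The set of critical values Δ(T₁, T₂). -/
def DeltaSet (T1 T2 : MergeTree) : Set ℝ :=
  {d | ∃ v ∈ T1.V, ∃ w ∈ T2.V, d = |T1.f v - T2.f w|} ∪
  {d | ∃ v1 ∈ T1.V, ∃ v2 ∈ T1.V, d = |T1.f v1 - T1.f v2| / 2} ∪
  {d | ∃ w1 ∈ T2.V, ∃ w2 ∈ T2.V, d = |T2.f w1 - T2.f w2| / 2}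

/-- The arrow `(x, y)` lies in the fan `F[A_φ]` of the partial up-map `(S, φ)`. -/
def InFan (T1 T2 : MergeTree) (S : Set T1.X) (φ : T1.X → T2.X) (x : T1.X) (y : T2.X) : Prop :=
  T1.f x ≤ T2.f y ∧ ∃ x0 ∈ S, φ x0 = y ∧ T1.le x0 x

open Classical in
/-- The `(S, φ)`-residual shift of an arrow `(x, y)`. -/
noncomputable def resArrowShift (T1 T2 : MergeTree) (S : Set T1.X) (φ : T1.X → T2.X)
    (x : T1.X) (y : T2.X) : ℝ :=
  if InFan T1 T2 S φ x y then 0 else T2.f y - T1.f x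

/-- The `(S, φ)`-residual shift of a partial up-map `(S', φ')`. -/
noncomputable def resMapShift (T1 T2 : MergeTree) (S : Set T1.X) (φ : T1.X → T2.X)
    (S' : Set T1.X) (φ' : T1.X → T2.X) : EReal :=
  sSup ((fun x => ((resArrowShift T1 T2 S φ x (φ' x) : ℝ) : EReal)) '' S')

/-- The `P`-residual shift of a partial interleaving `P' = (S1', φ', S2', ψ')`,
where `P = (S1, φ, S2, ψ)`. -/
noncomputable def resInterShift (T1 T2 : MergeTree)
    (S1 : Set T1.X) (φ : T1.X → T2.X) (S2 : Set T2.X) (ψ : T2.X → T1.X)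
    (S1' : Set T1.X) (φ' : T1.X → T2.X) (S2' : Set T2.X) (ψ' : T2.X → T1.X) : EReal :=
  max (resMapShift T1 T2 S1 φ S1' φ') (resMapShift T2 T1 S2 ψ S2' ψ')

/-- `(α, β)` is a complete interleaving extending the partial interleaving `(S1, φ, S2, ψ)`. -/
def IsCompleteExtension (T1 T2 : MergeTree)
    (S1 : Set T1.X) (φ : T1.X → T2.X) (S2 : Set T2.X) (ψ : T2.X → T1.X)
    (α : T1.X → T2.X) (β : T2.X → T1.X) : Prop :=
  IsInterleaving T1 T2 α β ∧ InterExtends T1 T2 univ α univ β S1 φ S2 ψ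

/-- The `P`-residual interleaving distance `d_P(T₁, T₂)`. -/
noncomputable def resDist (T1 T2 : MergeTree)
    (S1 : Set T1.X) (φ : T1.X → T2.X) (S2 : Set T2.X) (ψ : T2.X → T1.X) : EReal :=
  sInf {d : EReal | ∃ α β, IsCompleteExtension T1 T2 S1 φ S2 ψ α β ∧
    d = resInterShift T1 T2 S1 φ S2 ψ univ α univ β}

/-- The `P`-critical points of `T₁`. -/
def critPts1 (T1 T2 : MergeTree) (S1 : Set T1.X) (S2 : Set T2.X) (ψ : T2.X → T1.X) :
    Set T1.X :=
  T1.V ∪ S1 ∪ ψ '' S2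

/-- The `P`-critical points of `T₂`. -/
def critPts2 (T1 T2 : MergeTree) (S1 : Set T1.X) (φ : T1.X → T2.X) (S2 : Set T2.X) :
    Set T2.X :=
  T2.V ∪ S2 ∪ φ '' S1

/-- The set of `P`-critical values `Δ[P](T₁, T₂)`. -/
def DeltaPSet (T1 T2 : MergeTree)
    (S1 : Set T1.X) (φ : T1.X → T2.X) (S2 : Set T2.X) (ψ : T2.X → T1.X) : Set ℝ :=
  {d | ∃ v ∈ critPts1 T1 T2 S1 S2 ψ, ∃ w ∈ critPts2 T1 T2 S1 φ S2, d = |T1.f v - T2.f w|} ∪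
  {d | ∃ v1 ∈ T1.V, ∃ v2 ∈ T1.V, d = |T1.f v1 - T1.f v2| / 2} ∪
  {d | ∃ w1 ∈ T2.V, ∃ w2 ∈ T2.V, d = |T2.f w1 - T2.f w2| / 2}

/-- The partial interleaving `(S1', φ', S2', ψ')` uses a `P`-critical pair whose
corresponding critical value is `d`, where `P = (S1, φ, S2, ψ)` supplies the critical
points. The four disjuncts are: arrow critical pairs in either direction, and zigzag
critical pairs on either tree. -/
def UsesCritPair (T1 T2 : MergeTree)
    (S1 : Set T1.X) (φ : T1.X → T2.X) (S2 : Set T2.X) (ψ : T2.X → T1.X)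
    (S1' : Set T1.X) (φ' : T1.X → T2.X) (S2' : Set T2.X) (ψ' : T2.X → T1.X) (d : ℝ) : Prop :=
  (∃ v ∈ critPts1 T1 T2 S1 S2 ψ, ∃ w ∈ critPts2 T1 T2 S1 φ S2,
      T1.f v ≤ T2.f w ∧ d = T2.f w - T1.f v ∧ v ∈ S1' ∧ φ' v = w) ∨
  (∃ w ∈ critPts2 T1 T2 S1 φ S2, ∃ v ∈ critPts1 T1 T2 S1 S2 ψ,
      T2.f w ≤ T1.f v ∧ d = T1.f v - T2.f w ∧ w ∈ S2' ∧ ψ' w = v) ∨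
  (∃ v1 ∈ T1.V, ∃ v2 ∈ T1.V, d = (T1.f v2 - T1.f v1) / 2 ∧
      ∃ y, T2.f y = T1.f v1 + d ∧ v1 ∈ S1' ∧ φ' v1 = y ∧ y ∈ S2' ∧ ψ' y = v2) ∨
  (∃ w1 ∈ T2.V, ∃ w2 ∈ T2.V, d = (T2.f w2 - T2.f w1) / 2 ∧
      ∃ x, T1.f x = T2.f w1 + d ∧ w1 ∈ S2' ∧ ψ' w1 = x ∧ x ∈ S1' ∧ φ' x = w2)

/-- `Q = (SQ1, φQ, SQ2, ψQ)` is a `P`-augmentation, `P = (S1, φ, S2, ψ)`. -/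
def IsAugmentation (T1 T2 : MergeTree)
    (S1 : Set T1.X) (φ : T1.X → T2.X) (S2 : Set T2.X) (ψ : T2.X → T1.X)
    (SQ1 : Set T1.X) (φQ : T1.X → T2.X) (SQ2 : Set T2.X) (ψQ : T2.X → T1.X) : Prop :=
  IsPartialInterleaving T1 T2 SQ1 φQ SQ2 ψQ ∧
  InterExtends T1 T2 SQ1 φQ SQ2 ψQ S1 φ S2 ψ ∧
  resInterShift T1 T2 S1 φ S2 ψ SQ1 φQ SQ2 ψQ ≤ resDist T1 T2 S1 φ S2 ψ ∧
  resDist T1 T2 SQ1 φQ SQ2 ψQ < resDist T1 T2 S1 φ S2 ψ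

/-- Two partial interleavings are the same (same domains, agreeing maps on them). -/
def SameInter (T1 T2 : MergeTree)
    (S1 : Set T1.X) (φ : T1.X → T2.X) (S2 : Set T2.X) (ψ : T2.X → T1.X)
    (S1' : Set T1.X) (φ' : T1.X → T2.X) (S2' : Set T2.X) (ψ' : T2.X → T1.X) : Prop :=
  S1 = S1' ∧ S2 = S2' ∧ (∀ x ∈ S1, φ x = φ' x) ∧ (∀ y ∈ S2, ψ y = ψ' y)

/-- `Q` is a minimal `P`-augmentation: it does not (properly) extend any other
`P`-augmentation. -/
def IsMinimalAugmentation (T1 T2 : MergeTree)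
    (S1 : Set T1.X) (φ : T1.X → T2.X) (S2 : Set T2.X) (ψ : T2.X → T1.X)
    (SQ1 : Set T1.X) (φQ : T1.X → T2.X) (SQ2 : Set T2.X) (ψQ : T2.X → T1.X) : Prop :=
  IsAugmentation T1 T2 S1 φ S2 ψ SQ1 φQ SQ2 ψQ ∧
  ∀ SR1 φR SR2 ψR, IsAugmentation T1 T2 S1 φ S2 ψ SR1 φR SR2 ψR →
    InterExtends T1 T2 SQ1 φQ SQ2 ψQ SR1 φR SR2 ψR →
    SameInter T1 T2 SQ1 φQ SQ2 ψQ SR1 φR SR2 ψR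

/-- Domain of the relative difference of two partial maps. -/
def relDiffDom {X Y : Type} (SQ : Set X) (φQ : X → Y) (S : Set X) (φ : X → Y) : Set X :=
  SQ \ {x | x ∈ S ∧ φQ x = φ x}

/-- `P = (S1, φ, S2, ψ)` is dominant: the shift of each of its arrows strictly exceeds
`d_P(T₁, T₂)`. -/
def DominantInter (T1 T2 : MergeTree)
    (S1 : Set T1.X) (φ : T1.X → T2.X) (S2 : Set T2.X) (ψ : T2.X → T1.X) : Prop :=
  (∀ x ∈ S1, resDist T1 T2 S1 φ S2 ψ < ((T2.f (φ x) - T1.f x : ℝ) : EReal)) ∧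
  (∀ y ∈ S2, resDist T1 T2 S1 φ S2 ψ < ((T1.f (ψ y) - T2.f y : ℝ) : EReal))

/-- A partial interleaving is locally correct: for every restriction `R` of it,
`d_R(T₁, T₂) ≥ shift_R(P)`. -/
def LocallyCorrectPartial (T1 T2 : MergeTree)
    (S1 : Set T1.X) (φ : T1.X → T2.X) (S2 : Set T2.X) (ψ : T2.X → T1.X) : Prop :=
  ∀ S1' ⊆ S1, ∀ S2' ⊆ S2,
    resInterShift T1 T2 S1' φ S2' ψ S1 φ S2 ψ ≤ resDist T1 T2 S1' φ S2' ψ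

/-- A complete interleaving `(α, β)` is locally correct: for every restriction `R` of it,
`d_R(T₁, T₂) = shift_R(I)`. -/
def LocallyCorrect (T1 T2 : MergeTree) (α : T1.X → T2.X) (β : T2.X → T1.X) : Prop :=
  ∀ S1' : Set T1.X, ∀ S2' : Set T2.X,
    resDist T1 T2 S1' α S2' β = resInterShift T1 T2 S1' α S2' β univ α univ β

section Aux

lemma ereal_sSup_lt_of_finite {S : Set EReal} (hS : S.Finite) {b : EReal} (hb : ⊥ < b)
    (h : ∀ x ∈ S, x < b) : sSup S < b := by
  revert h
  refine Set.Finite.induction_on (motive := fun s _ => (∀ x ∈ s, x < b) → sSup s < b) S hS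
    (fun _ => by simpa using hb) ?_
  intro a s _ _ ih h
  rw [sSup_insert]
  exact max_lt (h a (Set.mem_insert _ _)) (ih fun x hx => h x (Set.mem_insert_of_mem _ hx))

lemma resArrowShift_nonneg (T1 T2 : MergeTree) (S : Set T1.X) (φ : T1.X → T2.X)
    {x : T1.X} {y : T2.X} (hxy : T1.f x ≤ T2.f y) :
    0 ≤ resArrowShift T1 T2 S φ x y := by
  unfold resArrowShift
  split
  · exact le_refl 0
  · linarith

lemma resArrowShift_of_not_fan (T1 T2 : MergeTree) (S : Set T1.X) (φ : T1.X → T2.X)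
    {x : T1.X} {y : T2.X} (h : ¬ InFan T1 T2 S φ x y) :
    resArrowShift T1 T2 S φ x y = T2.f y - T1.f x := if_neg h

lemma resArrowShift_of_fan (T1 T2 : MergeTree) (S : Set T1.X) (φ : T1.X → T2.X)
    {x : T1.X} {y : T2.X} (h : InFan T1 T2 S φ x y) :
    resArrowShift T1 T2 S φ x y = 0 := if_pos h

lemma le_resMapShift (T1 T2 : MergeTree) (S : Set T1.X) (φ : T1.X → T2.X)
    (S' : Set T1.X) (φ' : T1.X → T2.X) {x : T1.X} (hx : x ∈ S') :
    ((resArrowShift T1 T2 S φ x (φ' x) : ℝ) : EReal) ≤ resMapShift T1 T2 S φ S' φ' :=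
  le_sSup ⟨x, hx, rfl⟩

lemma resMapShift_le (T1 T2 : MergeTree) (S : Set T1.X) (φ : T1.X → T2.X)
    (S' : Set T1.X) (φ' : T1.X → T2.X) {t : EReal}
    (h : ∀ x ∈ S', ((resArrowShift T1 T2 S φ x (φ' x) : ℝ) : EReal) ≤ t) :
    resMapShift T1 T2 S φ S' φ' ≤ t := by
  apply sSup_le
  rintro d ⟨x, hx, rfl⟩
  exact h x hx

lemma resMapShift_mono (T1 T2 : MergeTree) (S : Set T1.X) (φ : T1.X → T2.X)
    {S' S'' : Set T1.X} (φ' : T1.X → T2.X) (hsub : S' ⊆ S'') :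
    resMapShift T1 T2 S φ S' φ' ≤ resMapShift T1 T2 S φ S'' φ' :=
  sSup_le_sSup (Set.image_mono hsub)

lemma resDist_le (T1 T2 : MergeTree) (S1 : Set T1.X) (φ : T1.X → T2.X)
    (S2 : Set T2.X) (ψ : T2.X → T1.X) {α : T1.X → T2.X} {β : T2.X → T1.X}
    (h : IsCompleteExtension T1 T2 S1 φ S2 ψ α β) :
    resDist T1 T2 S1 φ S2 ψ ≤ resInterShift T1 T2 S1 φ S2 ψ univ α univ β :=
  sInf_le ⟨α, β, h, rfl⟩

lemma le_resDist (T1 T2 : MergeTree) (S1 : Set T1.X) (φ : T1.X → T2.X)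
    (S2 : Set T2.X) (ψ : T2.X → T1.X) {t : EReal}
    (h : ∀ α β, IsCompleteExtension T1 T2 S1 φ S2 ψ α β →
      t ≤ resInterShift T1 T2 S1 φ S2 ψ univ α univ β) :
    t ≤ resDist T1 T2 S1 φ S2 ψ := by
  apply le_sInf
  rintro d ⟨α, β, hc, rfl⟩
  exact h α β hc

lemma exists_ext_of_resDist_lt (T1 T2 : MergeTree) (S1 : Set T1.X) (φ : T1.X → T2.X)
    (S2 : Set T2.X) (ψ : T2.X → T1.X) {a : EReal}
    (h : resDist T1 T2 S1 φ S2 ψ < a) :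
    ∃ α β, IsCompleteExtension T1 T2 S1 φ S2 ψ α β ∧
      resInterShift T1 T2 S1 φ S2 ψ univ α univ β < a := by
  obtain ⟨d, ⟨α, β, hc, rfl⟩, hlt⟩ := sInf_lt_iff.mp h
  exact ⟨α, β, hc, hlt⟩

lemma resDist_nonneg (T1 T2 : MergeTree) (S1 : Set T1.X) (φ : T1.X → T2.X)
    (S2 : Set T2.X) (ψ : T2.X → T1.X) :
    0 ≤ resDist T1 T2 S1 φ S2 ψ := by
  apply le_sInf
  rintro d ⟨α, β, hc, rfl⟩
  obtain ⟨x⟩ := T1.nonempty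
  have hf : T1.f x ≤ T2.f (α x) := hc.1.1.1 x (Set.mem_univ x)
  have h0 : (0 : EReal) ≤ ((resArrowShift T1 T2 S1 φ x (α x) : ℝ) : EReal) := by
    exact_mod_cast resArrowShift_nonneg T1 T2 S1 φ hf
  exact le_trans h0 (le_trans (le_resMapShift T1 T2 S1 φ univ α (Set.mem_univ x))
    (le_max_left _ _))

end Aux
section Swap

variable (T1 T2 : MergeTree)

lemma swap_partial {S1 : Set T1.X} {φ : T1.X → T2.X} {S2 : Set T2.X} {ψ : T2.X → T1.X}
    (h : IsPartialInterleaving T1 T2 S1 φ S2 ψ) :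
    IsPartialInterleaving T2 T1 S2 ψ S1 φ :=
  ⟨h.2.1, h.1, fun y hy x hx hle => h.2.2.2 x hx y hy hle,
    fun y hy x hx hle => h.2.2.1 x hx y hy hle⟩

lemma swap_extends {S1 φ S2 ψ S1' φ' S2' ψ'}
    (h : InterExtends T1 T2 S1 φ S2 ψ S1' φ' S2' ψ') :
    InterExtends T2 T1 S2 ψ S1 φ S2' ψ' S1' φ' := ⟨h.2, h.1⟩

lemma swap_completeExt {S1 φ S2 ψ} {α : T1.X → T2.X} {β : T2.X → T1.X}
    (h : IsCompleteExtension T1 T2 S1 φ S2 ψ α β) :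
    IsCompleteExtension T2 T1 S2 ψ S1 φ β α :=
  ⟨swap_partial T1 T2 h.1, swap_extends T1 T2 h.2⟩

lemma swap_resInterShift (S1 : Set T1.X) (φ : T1.X → T2.X) (S2 : Set T2.X) (ψ : T2.X → T1.X)
    (S1' : Set T1.X) (φ' : T1.X → T2.X) (S2' : Set T2.X) (ψ' : T2.X → T1.X) :
    resInterShift T1 T2 S1 φ S2 ψ S1' φ' S2' ψ' =
      resInterShift T2 T1 S2 ψ S1 φ S2' ψ' S1' φ' := max_comm _ _

lemma swap_resDist (S1 : Set T1.X) (φ : T1.X → T2.X) (S2 : Set T2.X) (ψ : T2.X → T1.X) :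
    resDist T1 T2 S1 φ S2 ψ = resDist T2 T1 S2 ψ S1 φ := by
  unfold resDist
  congr 1
  ext d
  constructor
  · rintro ⟨α, β, hc, rfl⟩
    exact ⟨β, α, swap_completeExt T1 T2 hc, swap_resInterShift T1 T2 _ _ _ _ _ _ _ _⟩
  · rintro ⟨β, α, hc, rfl⟩
    exact ⟨α, β, swap_completeExt T2 T1 hc, (swap_resInterShift T1 T2 _ _ _ _ _ _ _ _).symm⟩

lemma swap_sameInter {S1 φ S2 ψ S1' φ' S2' ψ'}
    (h : SameInter T1 T2 S1 φ S2 ψ S1' φ' S2' ψ') :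
    SameInter T2 T1 S2 ψ S1 φ S2' ψ' S1' φ' := ⟨h.2.1, h.1, h.2.2.2, h.2.2.1⟩

lemma swap_aug {S1 φ S2 ψ SQ1 φQ SQ2 ψQ}
    (h : IsAugmentation T1 T2 S1 φ S2 ψ SQ1 φQ SQ2 ψQ) :
    IsAugmentation T2 T1 S2 ψ S1 φ SQ2 ψQ SQ1 φQ := by
  refine ⟨swap_partial T1 T2 h.1, swap_extends T1 T2 h.2.1, ?_, ?_⟩
  · rw [← swap_resInterShift T1 T2, ← swap_resDist T1 T2]
    exact h.2.2.1
  · rw [← swap_resDist T1 T2, ← swap_resDist T1 T2]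
    exact h.2.2.2

lemma swap_minAug {S1 φ S2 ψ SQ1 φQ SQ2 ψQ}
    (h : IsMinimalAugmentation T1 T2 S1 φ S2 ψ SQ1 φQ SQ2 ψQ) :
    IsMinimalAugmentation T2 T1 S2 ψ S1 φ SQ2 ψQ SQ1 φQ := by
  refine ⟨swap_aug T1 T2 h.1, ?_⟩
  intro SR2 ψR SR1 φR haug hext
  exact swap_sameInter T1 T2 (h.2 SR1 φR SR2 ψR (swap_aug T2 T1 haug) (swap_extends T2 T1 hext))

lemma swap_dominant {S1 φ S2 ψ} (h : DominantInter T1 T2 S1 φ S2 ψ) :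
    DominantInter T2 T1 S2 ψ S1 φ := by
  refine ⟨fun y hy => ?_, fun x hx => ?_⟩
  · rw [← swap_resDist T1 T2]; exact h.2 y hy
  · rw [← swap_resDist T1 T2]; exact h.1 x hx

lemma swap_lc {S1 φ S2 ψ} (h : LocallyCorrectPartial T1 T2 S1 φ S2 ψ) :
    LocallyCorrectPartial T2 T1 S2 ψ S1 φ := by
  intro S2' h2 S1' h1
  rw [← swap_resInterShift T1 T2, ← swap_resDist T1 T2]
  exact h S1' h1 S2' h2

end Swap
section Main

variable (T1 T2 : MergeTree) (S1 : Set T1.X) (φ : T1.X → T2.X) (S2 : Set T2.X)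
  (ψ : T2.X → T1.X) (SQ1 : Set T1.X) (φQ : T1.X → T2.X) (SQ2 : Set T2.X) (ψQ : T2.X → T1.X)

lemma bigFan
    (hShift : resInterShift T1 T2 S1 φ S2 ψ SQ1 φQ SQ2 ψQ ≤ resDist T1 T2 S1 φ S2 ψ)
    {x : T1.X} (hx : x ∈ SQ1)
    (h : resDist T1 T2 S1 φ S2 ψ < ((T2.f (φQ x) - T1.f x : ℝ) : EReal)) :
    InFan T1 T2 S1 φ x (φQ x) := by
  by_contra hnf
  have h1 := le_trans (le_trans (le_resMapShift T1 T2 S1 φ SQ1 φQ hx) (le_max_left _ _)) hShift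
  rw [resArrowShift_of_not_fan T1 T2 S1 φ hnf] at h1
  exact absurd (lt_of_lt_of_le h h1) (lt_irrefl _)

lemma smallArrow
    (hShift : resInterShift T1 T2 S1 φ S2 ψ SQ1 φQ SQ2 ψQ ≤ resDist T1 T2 S1 φ S2 ψ)
    {x : T1.X} (hx : x ∈ SQ1) (hnf : ¬ InFan T1 T2 S1 φ x (φQ x)) :
    ((T2.f (φQ x) - T1.f x : ℝ) : EReal) ≤ resDist T1 T2 S1 φ S2 ψ := by
  have h1 := le_trans (le_trans (le_resMapShift T1 T2 S1 φ SQ1 φQ hx) (le_max_left _ _)) hShift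
  rwa [resArrowShift_of_not_fan T1 T2 S1 φ hnf] at h1

lemma usesP
    (hP : IsPartialInterleaving T1 T2 S1 φ S2 ψ)
    (hExt : InterExtends T1 T2 SQ1 φQ SQ2 ψQ S1 φ S2 ψ)
    (hShift : resInterShift T1 T2 S1 φ S2 ψ SQ1 φQ SQ2 ψQ ≤ resDist T1 T2 S1 φ S2 ψ)
    (hdom1 : ∀ x ∈ S1, resDist T1 T2 S1 φ S2 ψ < ((T2.f (φ x) - T1.f x : ℝ) : EReal)) :
    ∀ x ∈ S1, φQ x = φ x := by
  intro x hx
  have hsub : S1 ⊆ SQ1 := hExt.1.1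
  have hle : T2.le (φ x) (φQ x) := hExt.1.2 x hx
  have hf : T2.f (φ x) ≤ T2.f (φQ x) := T2.f_mono _ _ hle
  have hbig : resDist T1 T2 S1 φ S2 ψ < ((T2.f (φQ x) - T1.f x : ℝ) : EReal) := by
    refine lt_of_lt_of_le (hdom1 x hx) ?_
    exact_mod_cast (by linarith : T2.f (φ x) - T1.f x ≤ T2.f (φQ x) - T1.f x)
  obtain ⟨_, x1, hx1, hphi, hle1⟩ :=
    bigFan T1 T2 S1 φ S2 ψ SQ1 φQ SQ2 ψQ hShift (hsub hx) hbig
  have h2 : T2.le (φ x1) (φ x) := hP.1.2 x1 hx1 x hx hle1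
  rw [hphi] at h2
  exact T2.le_antisymm _ _ h2 hle

lemma restrict_partial (h : IsPartialInterleaving T1 T2 SQ1 φQ SQ2 ψQ)
    {S1' : Set T1.X} {S2' : Set T2.X} (h1 : S1' ⊆ SQ1) (h2 : S2' ⊆ SQ2) :
    IsPartialInterleaving T1 T2 S1' φQ S2' ψQ :=
  ⟨⟨fun x hx => h.1.1 x (h1 hx), fun a ha b hb hab => h.1.2 a (h1 ha) b (h1 hb) hab⟩,
   ⟨fun y hy => h.2.1.1 y (h2 hy), fun a ha b hb hab => h.2.1.2 a (h2 ha) b (h2 hb) hab⟩,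
   fun x hx y hy => h.2.2.1 x (h1 hx) y (h2 hy),
   fun x hx y hy => h.2.2.2 x (h1 hx) y (h2 hy)⟩

lemma rigid
    (hQ : IsMinimalAugmentation T1 T2 S1 φ S2 ψ SQ1 φQ SQ2 ψQ)
    {W1 : Set T1.X} {W2 : Set T2.X}
    (hW1 : S1 ⊆ W1) (hW1' : W1 ⊆ SQ1) (hW2 : S2 ⊆ W2) (hW2' : W2 ⊆ SQ2)
    (hdW : resDist T1 T2 W1 φQ W2 ψQ < resDist T1 T2 S1 φ S2 ψ) :
    W1 = SQ1 ∧ W2 = SQ2 := by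
  have hQP := hQ.1.1
  have hExt := hQ.1.2.1
  have haug : IsAugmentation T1 T2 S1 φ S2 ψ W1 φQ W2 ψQ := by
    refine ⟨restrict_partial T1 T2 SQ1 φQ SQ2 ψQ hQP hW1' hW2',
      ⟨⟨hW1, fun x hx => hExt.1.2 x hx⟩, ⟨hW2, fun y hy => hExt.2.2 y hy⟩⟩, ?_, hdW⟩
    refine le_trans (max_le ?_ ?_) hQ.1.2.2.1
    · exact le_trans (resMapShift_mono T1 T2 S1 φ φQ hW1') (le_max_left _ _)
    · exact le_trans (resMapShift_mono T2 T1 S2 ψ ψQ hW2') (le_max_right _ _)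
  have hsame := hQ.2 W1 φQ W2 ψQ haug
    ⟨⟨hW1', fun x _ => T2.le_refl _⟩, ⟨hW2', fun y _ => T1.le_refl _⟩⟩
  exact ⟨hsame.1.symm, hsame.2.1.symm⟩

lemma dom_half
    (hP : IsPartialInterleaving T1 T2 S1 φ S2 ψ)
    (hQ : IsMinimalAugmentation T1 T2 S1 φ S2 ψ SQ1 φQ SQ2 ψQ)
    (hdom : DominantInter T1 T2 S1 φ S2 ψ) :
    ∀ x ∈ SQ1, resDist T1 T2 SQ1 φQ SQ2 ψQ < ((T2.f (φQ x) - T1.f x : ℝ) : EReal) := by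
  intro x hx
  by_contra hcon
  push_neg at hcon
  have hLt := hQ.1.2.2.2
  by_cases hx1 : x ∈ S1
  · have husesP := usesP T1 T2 S1 φ S2 ψ SQ1 φQ SQ2 ψQ hP hQ.1.2.1 hQ.1.2.2.1 hdom.1 x hx1
    have h1 := hdom.1 x hx1
    rw [← husesP] at h1
    exact absurd (lt_trans (lt_of_lt_of_le h1 hcon) hLt) (lt_irrefl _)
  · obtain ⟨α, β, hc, hsh⟩ := exists_ext_of_resDist_lt T1 T2 SQ1 φQ SQ2 ψQ hLt
    have hcW : IsCompleteExtension T1 T2 (SQ1 \ {x}) φQ SQ2 ψQ α β :=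
      ⟨hc.1, ⟨⟨subset_univ _, fun z hz => hc.2.1.2 z hz.1⟩, hc.2.2⟩⟩
    set dQ := resDist T1 T2 SQ1 φQ SQ2 ψQ with hdQ
    set sQ := resInterShift T1 T2 SQ1 φQ SQ2 ψQ univ α univ β with hsQ
    have hA : resMapShift T1 T2 (SQ1 \ {x}) φQ univ α ≤ max sQ dQ := by
      apply resMapShift_le
      intro x' _
      by_cases hfanW : InFan T1 T2 (SQ1 \ {x}) φQ x' (α x')
      · rw [resArrowShift_of_fan _ _ _ _ hfanW]
        rw [EReal.coe_zero]
        exact le_trans (resDist_nonneg T1 T2 SQ1 φQ SQ2 ψQ) (le_max_right _ _)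
      · rw [resArrowShift_of_not_fan _ _ _ _ hfanW]
        by_cases hfanQ : InFan T1 T2 SQ1 φQ x' (α x')
        · obtain ⟨hfle, x0, hx0, hval, hle0⟩ := hfanQ
          have hx0x : x0 = x := by
            by_contra hne
            exact hfanW ⟨hfle, x0, ⟨hx0, hne⟩, hval, hle0⟩
          subst hx0x
          have hfx : T1.f x0 ≤ T1.f x' := T1.f_mono _ _ hle0
          refine le_trans ?_ (le_trans hcon (le_max_right _ _))
          rw [← hval]
          exact_mod_cast (by linarith : T2.f (φQ x0) - T1.f x' ≤ T2.f (φQ x0) - T1.f x0)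
        · have heq := resArrowShift_of_not_fan T1 T2 SQ1 φQ hfanQ
          rw [← heq]
          exact le_trans (le_trans (le_resMapShift T1 T2 SQ1 φQ univ α (Set.mem_univ x'))
            (le_max_left _ _)) (le_max_left _ _)
    have hW : resDist T1 T2 (SQ1 \ {x}) φQ SQ2 ψQ < resDist T1 T2 S1 φ S2 ψ := by
      have hB : resMapShift T2 T1 SQ2 ψQ univ β ≤ sQ := le_max_right _ _
      have h1 : resInterShift T1 T2 (SQ1 \ {x}) φQ SQ2 ψQ univ α univ β ≤ max sQ dQ :=
        max_le hA (le_trans hB (le_max_left _ _))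
      exact lt_of_le_of_lt (resDist_le _ _ _ _ _ _ hcW) (lt_of_le_of_lt h1 (max_lt hsh hLt))
    have hsub1 : S1 ⊆ SQ1 \ {x} := fun z hz =>
      ⟨hQ.1.2.1.1.1 hz, by simp only [Set.mem_singleton_iff]; rintro rfl; exact hx1 hz⟩
    have hrig := rigid T1 T2 S1 φ S2 ψ SQ1 φQ SQ2 ψQ hQ
      hsub1 Set.diff_subset hQ.1.2.1.2.1 (le_refl SQ2) hW
    rw [← hrig.1] at hx
    exact hx.2 rfl

end Main
/-- `x`'s `P`-arrow is covered by the restriction with domain `S'` and map `φQ`. -/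
def Cov (T1 T2 : MergeTree) (S' : Set T1.X) (φQ φ : T1.X → T2.X) (x : T1.X) : Prop :=
  ∃ z ∈ S', T1.le z x ∧ φQ z = φ x

section Main2

variable (T1 T2 : MergeTree) (S1 : Set T1.X) (φ : T1.X → T2.X) (S2 : Set T2.X)
  (ψ : T2.X → T1.X) (SQ1 : Set T1.X) (φQ : T1.X → T2.X) (SQ2 : Set T2.X) (ψQ : T2.X → T1.X)

lemma resArrowShift_congr {S S'' : Set T1.X} {φ' φ'' : T1.X → T2.X} {x : T1.X} {y : T2.X}
    (h : InFan T1 T2 S φ' x y ↔ InFan T1 T2 S'' φ'' x y) :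
    resArrowShift T1 T2 S φ' x y = resArrowShift T1 T2 S'' φ'' x y := by
  unfold resArrowShift
  by_cases h1 : InFan T1 T2 S φ' x y
  · rw [if_pos h1, if_pos (h.mp h1)]
  · rw [if_neg h1, if_neg (fun h2 => h1 (h.mpr h2))]

lemma resArrowShift_anti {S S'' : Set T1.X} (φ' : T1.X → T2.X) (hsub : S ⊆ S'')
    {x : T1.X} {y : T2.X} (hf : T1.f x ≤ T2.f y) :
    resArrowShift T1 T2 S'' φ' x y ≤ resArrowShift T1 T2 S φ' x y := by
  unfold resArrowShift
  by_cases h1 : InFan T1 T2 S φ' x y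
  · rw [if_pos h1, if_pos ⟨h1.1, h1.2.imp (fun z hz => ⟨hsub hz.1, hz.2⟩)⟩]
  · rw [if_neg h1]
    split
    · linarith
    · exact le_refl _

lemma fan_union {S1' : Set T1.X}
    (huse1 : ∀ x ∈ S1, φQ x = φ x)
    (hall1 : ∀ x ∈ S1, Cov T1 T2 S1' φQ φ x)
    (x' : T1.X) (y : T2.X) :
    InFan T1 T2 (S1' ∪ S1) φQ x' y ↔ InFan T1 T2 S1' φQ x' y := by
  constructor
  · rintro ⟨hf, w, hw, hval, hle⟩
    rcases hw with hw | hw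
    · exact ⟨hf, w, hw, hval, hle⟩
    · obtain ⟨z, hz, hlez, hvalz⟩ := hall1 w hw
      exact ⟨hf, z, hz, by rw [hvalz, ← huse1 w hw, hval],
        T1.le_trans _ _ _ hlez hle⟩
  · rintro ⟨hf, w, hw, hval, hle⟩
    exact ⟨hf, w, Set.mem_union_left _ hw, hval, hle⟩

lemma ext_union {S1' : Set T1.X} {S2' : Set T2.X}
    (huse1 : ∀ x ∈ S1, φQ x = φ x) (huse2 : ∀ y ∈ S2, ψQ y = ψ y)
    (hall1 : ∀ x ∈ S1, Cov T1 T2 S1' φQ φ x) (hall2 : ∀ y ∈ S2, Cov T2 T1 S2' ψQ ψ y)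
    {α : T1.X → T2.X} {β : T2.X → T1.X}
    (hc : IsCompleteExtension T1 T2 S1' φQ S2' ψQ α β) :
    IsCompleteExtension T1 T2 (S1' ∪ S1) φQ (S2' ∪ S2) ψQ α β := by
  refine ⟨hc.1, ⟨⟨subset_univ _, ?_⟩, ⟨subset_univ _, ?_⟩⟩⟩
  · intro x hx
    rcases hx with hx | hx
    · exact hc.2.1.2 x hx
    · obtain ⟨z, hz, hlez, hvalz⟩ := hall1 x hx
      have h1 : T2.le (φQ z) (α z) := hc.2.1.2 z hz
      have h2 : T2.le (α z) (α x) := hc.1.1.2 z (Set.mem_univ z) x (Set.mem_univ x) hlez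
      rw [hvalz, ← huse1 x hx] at h1
      exact T2.le_trans _ _ _ h1 h2
  · intro y hy
    rcases hy with hy | hy
    · exact hc.2.2.2 y hy
    · obtain ⟨w, hw, hlew, hvalw⟩ := hall2 y hy
      have h1 : T1.le (ψQ w) (β w) := hc.2.2.2 w hw
      have h2 : T1.le (β w) (β y) := hc.1.2.1.2 w (Set.mem_univ w) y (Set.mem_univ y) hlew
      rw [hvalw, ← huse2 y hy] at h1
      exact T1.le_trans _ _ _ h1 h2

lemma resDist_union_eq {S1' : Set T1.X} {S2' : Set T2.X}
    (huse1 : ∀ x ∈ S1, φQ x = φ x) (huse2 : ∀ y ∈ S2, ψQ y = ψ y)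
    (hall1 : ∀ x ∈ S1, Cov T1 T2 S1' φQ φ x) (hall2 : ∀ y ∈ S2, Cov T2 T1 S2' ψQ ψ y) :
    resDist T1 T2 (S1' ∪ S1) φQ (S2' ∪ S2) ψQ = resDist T1 T2 S1' φQ S2' ψQ := by
  apply le_antisymm
  · apply le_resDist
    intro α β hc
    refine le_trans (resDist_le _ _ _ _ _ _
      (ext_union T1 T2 S1 φ S2 ψ φQ ψQ huse1 huse2 hall1 hall2 hc)) ?_
    apply max_le
    · refine le_trans (resMapShift_le T1 T2 _ φQ univ α (fun x _ => ?_)) (le_max_left _ _)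
      have := resArrowShift_anti T1 T2 (S := S1') (S'' := S1' ∪ S1) φQ
        Set.subset_union_left (hc.1.1.1 x (Set.mem_univ x)) (y := α x)
      refine le_trans (EReal.coe_le_coe_iff.mpr this) ?_
      exact le_resMapShift T1 T2 S1' φQ univ α (Set.mem_univ x)
    · refine le_trans (resMapShift_le T2 T1 _ ψQ univ β (fun y _ => ?_)) (le_max_right _ _)
      have := resArrowShift_anti T2 T1 (S := S2') (S'' := S2' ∪ S2) ψQ
        Set.subset_union_left (hc.1.2.1.1 y (Set.mem_univ y)) (y := β y)
      refine le_trans (EReal.coe_le_coe_iff.mpr this) ?_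
      exact le_resMapShift T2 T1 S2' ψQ univ β (Set.mem_univ y)
  · apply le_resDist
    intro α β hc
    have hc' : IsCompleteExtension T1 T2 S1' φQ S2' ψQ α β :=
      ⟨hc.1, ⟨⟨subset_univ _, fun x hx => hc.2.1.2 x (Set.mem_union_left _ hx)⟩,
        ⟨subset_univ _, fun y hy => hc.2.2.2 y (Set.mem_union_left _ hy)⟩⟩⟩
    refine le_trans (resDist_le _ _ _ _ _ _ hc') ?_
    apply max_le
    · refine le_trans (resMapShift_le T1 T2 _ φQ univ α (fun x _ => ?_)) (le_max_left _ _)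
      rw [resArrowShift_congr T1 T2
        ((fan_union T1 T2 S1 φ φQ huse1 hall1 x (α x)).symm)]
      exact le_resMapShift T1 T2 _ φQ univ α (Set.mem_univ x)
    · refine le_trans (resMapShift_le T2 T1 _ ψQ univ β (fun y _ => ?_)) (le_max_right _ _)
      rw [resArrowShift_congr T2 T1
        ((fan_union T2 T1 S2 ψ ψQ huse2 hall2 y (β y)).symm)]
      exact le_resMapShift T2 T1 _ ψQ univ β (Set.mem_univ y)

end Main2
section Main3

variable (T1 T2 : MergeTree) (S1 : Set T1.X) (φ : T1.X → T2.X) (S2 : Set T2.X)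
  (ψ : T2.X → T1.X) (SQ1 : Set T1.X) (φQ : T1.X → T2.X) (SQ2 : Set T2.X) (ψQ : T2.X → T1.X)

lemma E3gen
    (hQ : IsMinimalAugmentation T1 T2 S1 φ S2 ψ SQ1 φQ SQ2 ψQ)
    (huse1 : ∀ x ∈ S1, φQ x = φ x)
    {S1' : Set T1.X} {S2' : Set T2.X} (h1 : S1' ⊆ SQ1) (h2 : S2' ⊆ SQ2) :
    ∀ x ∈ SQ1, ((resArrowShift T1 T2 (S1' ∪ S1) φQ x (φQ x) : ℝ) : EReal) ≤
      resDist T1 T2 (S1' ∪ S1) φQ (S2' ∪ S2) ψQ := by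
  intro x hx
  by_cases hfan : InFan T1 T2 (S1' ∪ S1) φQ x (φQ x)
  · rw [resArrowShift_of_fan _ _ _ _ hfan, EReal.coe_zero]
    exact resDist_nonneg _ _ _ _ _ _
  · rw [resArrowShift_of_not_fan _ _ _ _ hfan]
    by_cases hle : ((T2.f (φQ x) - T1.f x : ℝ) : EReal) ≤
        resDist T1 T2 (S1' ∪ S1) φQ (S2' ∪ S2) ψQ
    · exact hle
    · exfalso
      push_neg at hle
      have hnfP : ¬ InFan T1 T2 S1 φ x (φQ x) := by
        rintro ⟨hf, x2, hx2, hval, hle2⟩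
        exact hfan ⟨hf, x2, Set.mem_union_right _ hx2, by rw [huse1 x2 hx2, hval], hle2⟩
      have hdP := smallArrow T1 T2 S1 φ S2 ψ SQ1 φQ SQ2 ψQ hQ.1.2.2.1 hx hnfP
      have hW := rigid T1 T2 S1 φ S2 ψ SQ1 φQ SQ2 ψQ hQ
        (Set.subset_union_right) (Set.union_subset h1 hQ.1.2.1.1.1)
        (Set.subset_union_right) (Set.union_subset h2 hQ.1.2.1.2.1)
        (lt_of_lt_of_le hle hdP)
      apply hfan
      rw [hW.1]
      exact ⟨hQ.1.1.1.1 x hx, x, hx, rfl, T1.le_refl x⟩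

lemma Bcase
    (hP : IsPartialInterleaving T1 T2 S1 φ S2 ψ)
    (hShift : resInterShift T1 T2 S1 φ S2 ψ SQ1 φQ SQ2 ψQ ≤ resDist T1 T2 S1 φ S2 ψ)
    (huse1 : ∀ x ∈ S1, φQ x = φ x)
    {S1' : Set T1.X} (h1 : S1' ⊆ SQ1)
    {α : T1.X → T2.X} {β : T2.X → T1.X} (hI : IsInterleaving T1 T2 α β)
    (hIext1 : ∀ z ∈ S1', T2.le (φQ z) (α z))
    {x0 : T1.X} (hx0 : x0 ∈ S1) (hunc : ¬ Cov T1 T2 S1' φQ φ x0)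
    (hdP : resDist T1 T2 S1 φ S2 ψ < ((T2.f (φ x0) - T1.f x0 : ℝ) : EReal))
    (hsmall : resMapShift T1 T2 S1' φQ univ α < ((T2.f (φ x0) - T1.f x0 : ℝ) : EReal)) :
    ¬ InFan T1 T2 {x | x ∈ S1 ∧ T2.le (φ x) (α x)} φ x0 (φ x0) := by
  rintro ⟨hf0, x2, ⟨hx2S, hx2le⟩, hval2, hle2⟩
  have hφα : T2.le (φ x0) (α x0) := by
    rw [← hval2]
    exact T2.le_trans _ _ _ hx2le (hI.1.2 x2 (Set.mem_univ _) x0 (Set.mem_univ _) hle2)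
  have hcf : T2.f (φ x0) ≤ T2.f (α x0) := T2.f_mono _ _ hφα
  have hcfan : InFan T1 T2 S1' φQ x0 (α x0) := by
    by_contra hnf
    have h1' := le_resMapShift T1 T2 S1' φQ univ α (Set.mem_univ x0)
    rw [resArrowShift_of_not_fan _ _ _ _ hnf] at h1'
    have h2' : ((T2.f (φ x0) - T1.f x0 : ℝ) : EReal) ≤ ((T2.f (α x0) - T1.f x0 : ℝ) : EReal) := by
      exact_mod_cast (by linarith : T2.f (φ x0) - T1.f x0 ≤ T2.f (α x0) - T1.f x0)
    exact absurd (lt_of_le_of_lt (le_trans h2' h1') hsmall) (lt_irrefl _)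
  obtain ⟨_, x1, hx1S, hval1, hle1⟩ := hcfan
  by_cases hx1s : x1 ∈ S1
  · have h2 : T2.le (φ x1) (φ x0) := hP.1.2 x1 hx1s x0 hx0 hle1
    have h3 : T2.le (φ x0) (φ x1) := by
      rw [← huse1 x1 hx1s] at h2 ⊢
      rw [hval1]
      exact hφα
    have h4 : φ x0 = φ x1 := T2.le_antisymm _ _ h3 h2
    exact hunc ⟨x1, hx1S, hle1, by rw [huse1 x1 hx1s, ← h4]⟩
  · have hq : resDist T1 T2 S1 φ S2 ψ < ((T2.f (φQ x1) - T1.f x1 : ℝ) : EReal) := by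
      refine lt_of_lt_of_le hdP ?_
      have hfle : T1.f x1 ≤ T1.f x0 := T1.f_mono _ _ hle1
      have : T2.f (φ x0) ≤ T2.f (φQ x1) := by rw [hval1]; exact hcf
      exact_mod_cast (by linarith : T2.f (φ x0) - T1.f x0 ≤ T2.f (φQ x1) - T1.f x1)
    obtain ⟨_, x2', hx2', hval2', hle2'⟩ :=
      bigFan T1 T2 S1 φ S2 ψ SQ1 φQ SQ2 ψQ hShift (h1 hx1S) hq
    have h5 : T2.le (φ x2') (φ x0) := hP.1.2 x2' hx2' x0 hx0 (T1.le_trans _ _ _ hle2' hle1)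
    have h6 : T2.f (α x0) ≤ T2.f (φ x0) := by
      have := T2.f_mono _ _ h5
      rw [hval2', hval1] at this
      exact this
    have h7 : φ x0 = α x0 := T2.f_strictMono _ _ hφα (le_antisymm hcf h6)
    exact hunc ⟨x1, hx1S, hle1, by rw [hval1, ← h7]⟩

end Main3
section Main4

variable (T1 T2 : MergeTree) (S1 : Set T1.X) (φ : T1.X → T2.X) (S2 : Set T2.X)
  (ψ : T2.X → T1.X) (SQ1 : Set T1.X) (φQ : T1.X → T2.X) (SQ2 : Set T2.X) (ψQ : T2.X → T1.X)

lemma Acase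
    (hfinS1 : S1.Finite)
    (hShift : resInterShift T1 T2 S1 φ S2 ψ SQ1 φQ SQ2 ψQ ≤ resDist T1 T2 S1 φ S2 ψ)
    (hdom1 : ∀ x ∈ S1, resDist T1 T2 S1 φ S2 ψ < ((T2.f (φ x) - T1.f x : ℝ) : EReal))
    (huse1 : ∀ x ∈ S1, φQ x = φ x)
    {S1' : Set T1.X} (h1 : S1' ⊆ SQ1)
    {α : T1.X → T2.X} {β : T2.X → T1.X} (hI : IsInterleaving T1 T2 α β)
    (hIext1 : ∀ z ∈ S1', T2.le (φQ z) (α z))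
    {m : ℝ} (hm_unc : ∀ x ∈ S1, ¬ Cov T1 T2 S1' φQ φ x → T2.f (φ x) - T1.f x ≤ m)
    {t : EReal}
    (ht0 : 0 ≤ t)
    (htP : resDist T1 T2 S1 φ S2 ψ ≤ t)
    (htR : resMapShift T1 T2 S1' φQ univ α ≤ t)
    (htV : ∀ z ∈ S1', T2.f (φQ z) - T1.f z < m → ((T2.f (φQ z) - T1.f z : ℝ) : EReal) ≤ t)
    (x' : T1.X) :
    ((resArrowShift T1 T2 {x | x ∈ S1 ∧ T2.le (φ x) (α x)} φ x' (α x') : ℝ) : EReal) ≤ t := by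
  by_cases hfan : InFan T1 T2 {x | x ∈ S1 ∧ T2.le (φ x) (α x)} φ x' (α x')
  · rw [resArrowShift_of_fan _ _ _ _ hfan, EReal.coe_zero]; exact ht0
  · rw [resArrowShift_of_not_fan _ _ _ _ hfan]
    have hfcond : T1.f x' ≤ T2.f (α x') := hI.1.1 x' (Set.mem_univ x')
    by_cases hfanR : InFan T1 T2 S1' φQ x' (α x')
    · obtain ⟨_, x1, hx1S, hval1, hle1⟩ := hfanR
      by_cases hx1s : x1 ∈ S1
      · exfalso
        have ha1 : T2.le (α x1) (α x') := hI.1.2 x1 (Set.mem_univ _) x' (Set.mem_univ _) hle1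
        have ha2 : T2.le (α x') (α x1) := by rw [← hval1]; exact hIext1 x1 hx1S
        have ha : α x1 = α x' := T2.le_antisymm _ _ ha1 ha2
        have hb : φ x1 = α x' := by rw [← huse1 x1 hx1s, hval1]
        exact hfan ⟨hfcond, x1, ⟨hx1s, by rw [hb, ← ha] at *; rw [hb]; rw [← ha]; exact T2.le_refl _⟩, hb, hle1⟩
      · by_cases hq : InFan T1 T2 S1 φ x1 (φQ x1)
        · obtain ⟨_, x20, hx20S, hval20, hle20⟩ := hq
          -- descent
          have key : ∀ n : ℕ, ∀ x2, {y | y ∈ S1 ∧ T1.f y < T1.f x2}.ncard ≤ n →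
              x2 ∈ S1 → φ x2 = α x' → T1.le x2 x1 → x2 ≠ x1 →
              ((T2.f (α x') - T1.f x' : ℝ) : EReal) ≤ t := by
            intro n
            induction n using Nat.strong_induction_on with
            | _ n IH =>
              intro x2 hcard hx2S hval2 hle2 hne2
              by_cases hcov : Cov T1 T2 S1' φQ φ x2
              · obtain ⟨z, hzS, hlez, hvalz⟩ := hcov
                by_cases hzS1 : z ∈ S1
                · exfalso
                  have hzval : φ z = α x' := by rw [← huse1 z hzS1, hvalz, hval2]
                  have hzle : T2.le (φ z) (α z) := by
                    rw [← huse1 z hzS1]; exact hIext1 z hzS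
                  exact hfan ⟨hfcond, z, ⟨hzS1, hzle⟩, hzval,
                    T1.le_trans _ _ _ hlez (T1.le_trans _ _ _ hle2 hle1)⟩
                · have hzx2 : z ≠ x2 := fun h => hzS1 (h ▸ hx2S)
                  have hfz : T1.f z < T1.f x2 :=
                    lt_of_le_of_ne (T1.f_mono _ _ hlez)
                      (fun h => hzx2 (T1.f_strictMono _ _ hlez h))
                  have hqz : resDist T1 T2 S1 φ S2 ψ <
                      ((T2.f (φQ z) - T1.f z : ℝ) : EReal) := by
                    refine lt_of_lt_of_le (hdom1 x2 hx2S) ?_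
                    have : T2.f (φQ z) = T2.f (φ x2) := by rw [hvalz]
                    exact_mod_cast (by linarith [T1.f_mono _ _ hlez] :
                      T2.f (φ x2) - T1.f x2 ≤ T2.f (φQ z) - T1.f z)
                  obtain ⟨_, x3, hx3S, hval3, hle3⟩ :=
                    bigFan T1 T2 S1 φ S2 ψ SQ1 φQ SQ2 ψQ hShift (h1 hzS) hqz
                  have hfx3 : T1.f x3 < T1.f x2 := lt_of_le_of_lt (T1.f_mono _ _ hle3) hfz
                  have hle3' : T1.le x3 x1 :=
                    T1.le_trans _ _ _ hle3 (T1.le_trans _ _ _ hlez hle2)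
                  have hne3 : x3 ≠ x1 := by
                    intro h
                    have := T1.f_mono _ _ hle2
                    rw [h] at hfx3
                    linarith
                  have hsub : {y | y ∈ S1 ∧ T1.f y < T1.f x3} ⊆
                      {y | y ∈ S1 ∧ T1.f y < T1.f x2} :=
                    fun y hy => ⟨hy.1, lt_trans hy.2 hfx3⟩
                  have hssub : {y | y ∈ S1 ∧ T1.f y < T1.f x3} ⊂
                      {y | y ∈ S1 ∧ T1.f y < T1.f x2} :=
                    ⟨hsub, fun hss => absurd (hss ⟨hx3S, hfx3⟩).2 (lt_irrefl _)⟩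
                  have hfinb : {y | y ∈ S1 ∧ T1.f y < T1.f x2}.Finite :=
                    hfinS1.subset (fun y hy => hy.1)
                  have hlt : {y | y ∈ S1 ∧ T1.f y < T1.f x3}.ncard < n :=
                    lt_of_lt_of_le (Set.ncard_lt_ncard hssub hfinb) hcard
                  exact IH _ hlt x3 (le_refl _) hx3S
                    (by rw [hval3, hvalz, hval2]) hle3' hne3
              · have hb2 : T2.f (φ x2) - T1.f x2 ≤ m := hm_unc x2 hx2S hcov
                have hf12 : T1.f x2 < T1.f x1 :=
                  lt_of_le_of_ne (T1.f_mono _ _ hle2)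
                    (fun h => hne2 (T1.f_strictMono _ _ hle2 h))
                have hq_lt : T2.f (φQ x1) - T1.f x1 < m := by
                  rw [hval1, ← hval2]
                  linarith
                have h10 := htV x1 hx1S hq_lt
                refine le_trans ?_ h10
                rw [hval1]
                exact_mod_cast (by linarith [T1.f_mono _ _ hle1] :
                  T2.f (α x') - T1.f x' ≤ T2.f (α x') - T1.f x1)
          exact key _ x20 (le_refl _) hx20S (by rw [hval20, hval1])
            hle20 (fun h => hx1s (h ▸ hx20S))
        · have hsm := smallArrow T1 T2 S1 φ S2 ψ SQ1 φQ SQ2 ψQ hShift (h1 hx1S) hq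
          refine le_trans (le_trans ?_ hsm) htP
          rw [hval1]
          exact_mod_cast (by linarith [T1.f_mono _ _ hle1] :
            T2.f (α x') - T1.f x' ≤ T2.f (α x') - T1.f x1)
    · have h1' := le_resMapShift T1 T2 S1' φQ univ α (Set.mem_univ x')
      rw [resArrowShift_of_not_fan _ _ _ _ hfanR] at h1'
      exact le_trans h1' htR

end Main4
section Main5

variable (T1 T2 : MergeTree) (S1 : Set T1.X) (φ : T1.X → T2.X) (S2 : Set T2.X)
  (ψ : T2.X → T1.X) (SQ1 : Set T1.X) (φQ : T1.X → T2.X) (SQ2 : Set T2.X) (ψQ : T2.X → T1.X)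

lemma claimM
    (hP : IsPartialInterleaving T1 T2 S1 φ S2 ψ)
    (hfin : S1.Finite ∧ S2.Finite)
    (hQfin : SQ1.Finite ∧ SQ2.Finite)
    (hQ : IsMinimalAugmentation T1 T2 S1 φ S2 ψ SQ1 φQ SQ2 ψQ)
    (hdom : DominantInter T1 T2 S1 φ S2 ψ)
    (hlc : LocallyCorrectPartial T1 T2 S1 φ S2 ψ)
    {S1' : Set T1.X} {S2' : Set T2.X} (h1 : S1' ⊆ SQ1) (h2 : S2' ⊆ SQ2)
    (hunc : (∃ x ∈ S1, ¬ Cov T1 T2 S1' φQ φ x) ∨ (∃ y ∈ S2, ¬ Cov T2 T1 S2' ψQ ψ y)) :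
    ∃ m : ℝ,
      (∀ x ∈ S1, ¬ Cov T1 T2 S1' φQ φ x → T2.f (φ x) - T1.f x ≤ m) ∧
      (∀ y ∈ S2, ¬ Cov T2 T1 S2' ψQ ψ y → T1.f (ψ y) - T2.f y ≤ m) ∧
      resDist T1 T2 S1 φ S2 ψ < (m : EReal) ∧
      (m : EReal) ≤ resDist T1 T2 S1' φQ S2' ψQ := by
  classical
  -- swapped hypotheses
  have hP' := swap_partial T1 T2 hP
  have hExt := hQ.1.2.1
  have hExt' := swap_extends T1 T2 hExt
  have hShift := hQ.1.2.2.1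
  have hShift' : resInterShift T2 T1 S2 ψ S1 φ SQ2 ψQ SQ1 φQ ≤ resDist T2 T1 S2 ψ S1 φ := by
    rw [← swap_resInterShift T1 T2, ← swap_resDist T1 T2]; exact hShift
  have hdom1 := hdom.1
  have hdom2 : ∀ y ∈ S2, resDist T2 T1 S2 ψ S1 φ < ((T1.f (ψ y) - T2.f y : ℝ) : EReal) := by
    intro y hy; rw [← swap_resDist T1 T2]; exact hdom.2 y hy
  have huse1 := usesP T1 T2 S1 φ S2 ψ SQ1 φQ SQ2 ψQ hP hExt hShift hdom1
  have huse2 := usesP T2 T1 S2 ψ S1 φ SQ2 ψQ SQ1 φQ hP' hExt' hShift' hdom2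
  -- the maximal uncovered shift
  set U : Set ℝ := ((fun x => T2.f (φ x) - T1.f x) '' {x | x ∈ S1 ∧ ¬ Cov T1 T2 S1' φQ φ x}) ∪
    ((fun y => T1.f (ψ y) - T2.f y) '' {y | y ∈ S2 ∧ ¬ Cov T2 T1 S2' ψQ ψ y}) with hU
  have hUfin : U.Finite :=
    ((hfin.1.subset (fun x hx => hx.1)).image _).union ((hfin.2.subset (fun y hy => hy.1)).image _)
  have hUne : U.Nonempty := by
    rcases hunc with ⟨x, hx, hcx⟩ | ⟨y, hy, hcy⟩
    · exact ⟨_, Set.mem_union_left _ ⟨x, ⟨hx, hcx⟩, rfl⟩⟩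
    · exact ⟨_, Set.mem_union_right _ ⟨y, ⟨hy, hcy⟩, rfl⟩⟩
  obtain ⟨m, hmU, hmax⟩ := Set.exists_max_image U id hUfin hUne
  refine ⟨m, ?_, ?_, ?_, ?_⟩
  · intro x hx hcx
    exact hmax _ (Set.mem_union_left _ ⟨x, ⟨hx, hcx⟩, rfl⟩)
  · intro y hy hcy
    exact hmax _ (Set.mem_union_right _ ⟨y, ⟨hy, hcy⟩, rfl⟩)
  · rcases hmU with ⟨x0, ⟨hx0, _⟩, heq⟩ | ⟨y0, ⟨hy0, _⟩, heq⟩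
    · have heq' : T2.f (φ x0) - T1.f x0 = m := heq
      rw [← heq']; exact hdom1 x0 hx0
    · have heq' : T1.f (ψ y0) - T2.f y0 = m := heq
      rw [← heq', swap_resDist T1 T2]; exact hdom2 y0 hy0
  · apply le_resDist
    intro α β hc
    by_contra hge
    push_neg at hge
    have hsmall1 : resMapShift T1 T2 S1' φQ univ α < ((m : ℝ) : EReal) :=
      lt_of_le_of_lt (le_max_left _ _) hge
    have hsmall2 : resMapShift T2 T1 S2' ψQ univ β < ((m : ℝ) : EReal) :=
      lt_of_le_of_lt (le_max_right _ _) hge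
    have hIext1 : ∀ z ∈ S1', T2.le (φQ z) (α z) := hc.2.1.2
    have hIext2 : ∀ w ∈ S2', T1.le (ψQ w) (β w) := hc.2.2.2
    have hI := hc.1
    have hI' : IsInterleaving T2 T1 β α := swap_partial T1 T2 hI
    set S1'' : Set T1.X := {x | x ∈ S1 ∧ T2.le (φ x) (α x)} with hS1''
    set S2'' : Set T2.X := {y | y ∈ S2 ∧ T1.le (ψ y) (β y)} with hS2''
    have hc0 : IsCompleteExtension T1 T2 S1'' φ S2'' ψ α β :=
      ⟨hc.1, ⟨⟨subset_univ _, fun x hx => hx.2⟩, ⟨subset_univ _, fun y hy => hy.2⟩⟩⟩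
    set V1 : Set T1.X := {z | z ∈ S1' ∧ T2.f (φQ z) - T1.f z < m} with hV1
    set V2 : Set T2.X := {w | w ∈ S2' ∧ T1.f (ψQ w) - T2.f w < m} with hV2
    set s1m : EReal := sSup ((fun z => ((T2.f (φQ z) - T1.f z : ℝ) : EReal)) '' V1) with hs1m
    set s2m : EReal := sSup ((fun w => ((T1.f (ψQ w) - T2.f w : ℝ) : EReal)) '' V2) with hs2m
    set t : EReal := max (resDist T1 T2 S1 φ S2 ψ)
      (max (resInterShift T1 T2 S1' φQ S2' ψQ univ α univ β) (max s1m s2m)) with ht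
    have ht0 : (0 : EReal) ≤ t :=
      le_trans (resDist_nonneg T1 T2 S1 φ S2 ψ) (le_max_left _ _)
    have htP : resDist T1 T2 S1 φ S2 ψ ≤ t := le_max_left _ _
    have htP' : resDist T2 T1 S2 ψ S1 φ ≤ t := by rw [← swap_resDist T1 T2]; exact htP
    have htR : resMapShift T1 T2 S1' φQ univ α ≤ t :=
      le_trans (le_max_left _ _) (le_trans (le_max_left _ _) (le_max_right _ _))
    have htR' : resMapShift T2 T1 S2' ψQ univ β ≤ t :=
      le_trans (le_max_right _ _) (le_trans (le_max_left _ _) (le_max_right _ _))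
    have htV : ∀ z ∈ S1', T2.f (φQ z) - T1.f z < m →
        ((T2.f (φQ z) - T1.f z : ℝ) : EReal) ≤ t := by
      intro z hz hzlt
      refine le_trans (le_sSup ⟨z, ⟨hz, hzlt⟩, rfl⟩ : _ ≤ s1m) ?_
      exact le_trans (le_max_left _ _) (le_trans (le_max_right _ _) (le_max_right _ _))
    have htV' : ∀ w ∈ S2', T1.f (ψQ w) - T2.f w < m →
        ((T1.f (ψQ w) - T2.f w : ℝ) : EReal) ≤ t := by
      intro w hw hwlt
      refine le_trans (le_sSup ⟨w, ⟨hw, hwlt⟩, rfl⟩ : _ ≤ s2m) ?_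
      exact le_trans (le_max_right _ _) (le_trans (le_max_right _ _) (le_max_right _ _))
    have hm_unc1 : ∀ x ∈ S1, ¬ Cov T1 T2 S1' φQ φ x → T2.f (φ x) - T1.f x ≤ m :=
      fun x hx hcx => hmax _ (Set.mem_union_left _ ⟨x, ⟨hx, hcx⟩, rfl⟩)
    have hm_unc2 : ∀ y ∈ S2, ¬ Cov T2 T1 S2' ψQ ψ y → T1.f (ψ y) - T2.f y ≤ m :=
      fun y hy hcy => hmax _ (Set.mem_union_right _ ⟨y, ⟨hy, hcy⟩, rfl⟩)
    -- the R0-shift of I is at most t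
    have hR0 : resInterShift T1 T2 S1'' φ S2'' ψ univ α univ β ≤ t := by
      apply max_le
      · exact resMapShift_le T1 T2 S1'' φ univ α (fun x' _ =>
          Acase T1 T2 S1 φ S2 ψ SQ1 φQ SQ2 ψQ hfin.1 hShift hdom1 huse1 h1 hI hIext1
            hm_unc1 ht0 htP htR htV x')
      · exact resMapShift_le T2 T1 S2'' ψ univ β (fun y' _ =>
          Acase T2 T1 S2 ψ S1 φ SQ2 ψQ SQ1 φQ hfin.2 hShift' hdom2 huse2 h2 hI' hIext2
            hm_unc2 ht0 htP' htR' htV' y')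
    -- t < m
    have hs1mlt : s1m < ((m : ℝ) : EReal) := by
      apply ereal_sSup_lt_of_finite
      · exact (((hQfin.1.subset h1).subset (fun z hz => hz.1)).image _)
      · exact EReal.bot_lt_coe m
      · rintro v ⟨z, hz, rfl⟩
        show ((T2.f (φQ z) - T1.f z : ℝ) : EReal) < (m : EReal)
        exact_mod_cast hz.2
    have hs2mlt : s2m < ((m : ℝ) : EReal) := by
      apply ereal_sSup_lt_of_finite
      · exact (((hQfin.2.subset h2).subset (fun w hw => hw.1)).image _)
      · exact EReal.bot_lt_coe m
      · rintro v ⟨w, hw, rfl⟩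
        show ((T1.f (ψQ w) - T2.f w : ℝ) : EReal) < (m : EReal)
        exact_mod_cast hw.2
    have hdPm : resDist T1 T2 S1 φ S2 ψ < ((m : ℝ) : EReal) := by
      rcases hmU with ⟨x0, ⟨hx0, _⟩, heq⟩ | ⟨y0, ⟨hy0, _⟩, heq⟩
      · have heq' : T2.f (φ x0) - T1.f x0 = m := heq
        rw [← heq']; exact hdom1 x0 hx0
      · have heq' : T1.f (ψ y0) - T2.f y0 = m := heq
        rw [← heq', swap_resDist T1 T2]; exact hdom2 y0 hy0
    have htm : t < ((m : ℝ) : EReal) :=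
      max_lt hdPm (max_lt hge (max_lt hs1mlt hs2mlt))
    -- the P-local-correctness contradiction
    have hfinal : ((m : ℝ) : EReal) ≤ resDist T1 T2 S1'' φ S2'' ψ := by
      rcases hmU with ⟨x0, ⟨hx0, hcx0⟩, heq⟩ | ⟨y0, ⟨hy0, hcy0⟩, heq⟩
      · have heq' : T2.f (φ x0) - T1.f x0 = m := heq
        have hB := Bcase T1 T2 S1 φ S2 ψ SQ1 φQ SQ2 ψQ hP hShift huse1 h1 hI hIext1
          hx0 hcx0 (hdom1 x0 hx0) (by rw [heq']; exact hsmall1)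
        have hval : resArrowShift T1 T2 S1'' φ x0 (φ x0) = T2.f (φ x0) - T1.f x0 :=
          resArrowShift_of_not_fan _ _ _ _ hB
        have hmem := le_resMapShift T1 T2 S1'' φ S1 φ hx0
        rw [hval, heq'] at hmem
        refine le_trans hmem (le_trans
          (le_max_left _ (resMapShift T2 T1 S2'' ψ S2 ψ)) ?_)
        exact hlc S1'' (fun x hx => hx.1) S2'' (fun y hy => hy.1)
      · have heq' : T1.f (ψ y0) - T2.f y0 = m := heq
        have hB := Bcase T2 T1 S2 ψ S1 φ SQ2 ψQ SQ1 φQ hP' hShift' huse2 h2 hI' hIext2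
          hy0 hcy0 (hdom2 y0 hy0) (by rw [heq']; exact hsmall2)
        have hval : resArrowShift T2 T1 S2'' ψ y0 (ψ y0) = T1.f (ψ y0) - T2.f y0 :=
          resArrowShift_of_not_fan _ _ _ _ hB
        have hmem := le_resMapShift T2 T1 S2'' ψ S2 ψ hy0
        rw [hval, heq'] at hmem
        rw [swap_resDist T1 T2]
        refine le_trans hmem (le_trans
          (le_max_left _ (resMapShift T1 T2 S1'' φ S1 φ)) ?_)
        exact swap_lc T1 T2 hlc S2'' (fun y hy => hy.1) S1'' (fun x hx => hx.1)
    have := le_trans hfinal (le_trans (resDist_le T1 T2 S1'' φ S2'' ψ hc0) hR0)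
    exact absurd (lt_of_le_of_lt this htm) (lt_irrefl _)

end Main5
section Main6

variable (T1 T2 : MergeTree) (S1 : Set T1.X) (φ : T1.X → T2.X) (S2 : Set T2.X)
  (ψ : T2.X → T1.X) (SQ1 : Set T1.X) (φQ : T1.X → T2.X) (SQ2 : Set T2.X) (ψQ : T2.X → T1.X)

lemma lc_half
    (hP : IsPartialInterleaving T1 T2 S1 φ S2 ψ)
    (hfin : S1.Finite ∧ S2.Finite)
    (hQfin : SQ1.Finite ∧ SQ2.Finite)
    (hQ : IsMinimalAugmentation T1 T2 S1 φ S2 ψ SQ1 φQ SQ2 ψQ)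
    (hdom : DominantInter T1 T2 S1 φ S2 ψ)
    (hlc : LocallyCorrectPartial T1 T2 S1 φ S2 ψ)
    {S1' : Set T1.X} {S2' : Set T2.X} (h1 : S1' ⊆ SQ1) (h2 : S2' ⊆ SQ2) :
    resMapShift T1 T2 S1' φQ SQ1 φQ ≤ resDist T1 T2 S1' φQ S2' ψQ := by
  have hP' := swap_partial T1 T2 hP
  have hExt := hQ.1.2.1
  have hExt' := swap_extends T1 T2 hExt
  have hShift := hQ.1.2.2.1
  have hShift' : resInterShift T2 T1 S2 ψ S1 φ SQ2 ψQ SQ1 φQ ≤ resDist T2 T1 S2 ψ S1 φ := by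
    rw [← swap_resInterShift T1 T2, ← swap_resDist T1 T2]; exact hShift
  have hdom1 := hdom.1
  have hdom2 : ∀ y ∈ S2, resDist T2 T1 S2 ψ S1 φ < ((T1.f (ψ y) - T2.f y : ℝ) : EReal) := by
    intro y hy; rw [← swap_resDist T1 T2]; exact hdom.2 y hy
  have huse1 := usesP T1 T2 S1 φ S2 ψ SQ1 φQ SQ2 ψQ hP hExt hShift hdom1
  have huse2 := usesP T2 T1 S2 ψ S1 φ SQ2 ψQ SQ1 φQ hP' hExt' hShift' hdom2
  apply resMapShift_le
  intro x hx
  by_cases hfan : InFan T1 T2 S1' φQ x (φQ x)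
  · rw [resArrowShift_of_fan _ _ _ _ hfan, EReal.coe_zero]
    exact resDist_nonneg _ _ _ _ _ _
  · rw [resArrowShift_of_not_fan _ _ _ _ hfan]
    by_cases hall : (∀ x' ∈ S1, Cov T1 T2 S1' φQ φ x') ∧ (∀ y' ∈ S2, Cov T2 T1 S2' ψQ ψ y')
    · have hEq := resDist_union_eq T1 T2 S1 φ S2 ψ φQ ψQ huse1 huse2 hall.1 hall.2
      have hE3 := E3gen T1 T2 S1 φ S2 ψ SQ1 φQ SQ2 ψQ hQ huse1 h1 h2 x hx
      have hnfW : ¬ InFan T1 T2 (S1' ∪ S1) φQ x (φQ x) :=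
        fun h => hfan ((fan_union T1 T2 S1 φ φQ huse1 hall.1 x (φQ x)).mp h)
      rw [resArrowShift_of_not_fan _ _ _ _ hnfW, hEq] at hE3
      exact hE3
    · have hunc : (∃ x' ∈ S1, ¬ Cov T1 T2 S1' φQ φ x') ∨
          (∃ y' ∈ S2, ¬ Cov T2 T1 S2' ψQ ψ y') := by
        by_contra hno
        push_neg at hno
        exact hall ⟨fun x' hx' => hno.1 x' hx',
          fun y' hy' => hno.2 y' hy'⟩
      obtain ⟨m, hm1, _, hdPm, hmd⟩ := claimM T1 T2 S1 φ S2 ψ SQ1 φQ SQ2 ψQ hP hfin hQfin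
        hQ hdom hlc h1 h2 hunc
      by_cases hfp : InFan T1 T2 S1 φ x (φQ x)
      · obtain ⟨_, x2, hx2, hval2, hle2⟩ := hfp
        have hx2unc : ¬ Cov T1 T2 S1' φQ φ x2 := by
          rintro ⟨z, hz, hlez, hvz⟩
          exact hfan ⟨hQ.1.1.1.1 x hx, z, hz, by rw [hvz, hval2],
            T1.le_trans _ _ _ hlez hle2⟩
        have hb := hm1 x2 hx2 hx2unc
        refine le_trans ?_ hmd
        have hgoal : T2.f (φQ x) - T1.f x ≤ m := by
          have hfm := T1.f_mono _ _ hle2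
          rw [hval2] at hb
          linarith
        exact_mod_cast hgoal
      · have hsm := smallArrow T1 T2 S1 φ S2 ψ SQ1 φQ SQ2 ψQ hShift hx hfp
        exact le_trans hsm (le_trans (le_of_lt hdPm) hmd)

end Main6
/-- If P is finite with d_P(T₁,T₂) > 0 and Q is a finite minimal
P-augmentation, and P is dominant and locally correct, then so is Q. -/
theorem minimal_augmentation_dominant_locallyCorrect (T1 T2 : MergeTree)
    (S1 : Set T1.X) (φ : T1.X → T2.X) (S2 : Set T2.X) (ψ : T2.X → T1.X)
    (hP : IsPartialInterleaving T1 T2 S1 φ S2 ψ)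
    (hfin : S1.Finite ∧ S2.Finite)
    (hpos : 0 < resDist T1 T2 S1 φ S2 ψ)
    (SQ1 : Set T1.X) (φQ : T1.X → T2.X) (SQ2 : Set T2.X) (ψQ : T2.X → T1.X)
    (hQfin : SQ1.Finite ∧ SQ2.Finite)
    (hQ : IsMinimalAugmentation T1 T2 S1 φ S2 ψ SQ1 φQ SQ2 ψQ)
    (hdom : DominantInter T1 T2 S1 φ S2 ψ)
    (hlc : LocallyCorrectPartial T1 T2 S1 φ S2 ψ) :
    DominantInter T1 T2 SQ1 φQ SQ2 ψQ ∧
    LocallyCorrectPartial T1 T2 SQ1 φQ SQ2 ψQ := by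
  have hP' := swap_partial T1 T2 hP
  have hfin' : S2.Finite ∧ S1.Finite := ⟨hfin.2, hfin.1⟩
  have hQfin' : SQ2.Finite ∧ SQ1.Finite := ⟨hQfin.2, hQfin.1⟩
  have hQ' := swap_minAug T1 T2 hQ
  have hdom' := swap_dominant T1 T2 hdom
  have hlc' := swap_lc T1 T2 hlc
  constructor
  · constructor
    · exact dom_half T1 T2 S1 φ S2 ψ SQ1 φQ SQ2 ψQ hP hQ hdom
    · intro y hy
      rw [swap_resDist T1 T2]
      exact dom_half T2 T1 S2 ψ S1 φ SQ2 ψQ SQ1 φQ hP' hQ' hdom' y hy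
  · intro S1' h1 S2' h2
    apply max_le
    · exact lc_half T1 T2 S1 φ S2 ψ SQ1 φQ SQ2 ψQ hP hfin hQfin hQ hdom hlc h1 h2
    · have hhalf := lc_half T2 T1 S2 ψ S1 φ SQ2 ψQ SQ1 φQ hP' hfin' hQfin' hQ' hdom' hlc' h2 h1
      rw [← swap_resDist T1 T2] at hhalf
      exact hhalf
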